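/- Fix an integer m ≥ 1, let a_{1+} ∈ (0,1) and a_{1−} ∈ (−2m−1, −2m) be the two real roots of t^{2m+2} + 2m·t^{2m+1} = 1, and set g₁(t) = (2m+2)·t^m + t^{m+1} + t^{−(m+1)}. Then: (1) for every complex root α of t^{2m+2} + 2m·t^{2m+1} = 1 with α ≠ a_{1+} and α ≠ a_{1−}, one has |g₁(α)| < g₁(a_{1+}), and g₁(a_{1+}) < 4m+4; (2) 2·(2m)^m − 1 < (−1)^m · g₁(a_{1−}) < 2·(2m)^m; (3) if m ≥ 2 then |g₁(a_{1−})| > g₁(a_{1+}), while if m = 1 then g₁(a_{1+}) > |g₁(a_{1−})|. -/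

import Mathlib

private lemma st18_root {K : Type*} [Field K] {m : ℕ} {x : K}
    (h : x ^ (2*m+2) + 2*m*x^(2*m+1) = 1) : x^(2*m+1) * (x + 2*m) = 1 := by
  linear_combination h

private lemma st18_ne_zero {K : Type*} [Field K] {m : ℕ} {x : K}
    (h : x^(2*m+1) * (x + 2*m) = 1) : x ≠ 0 := by
  rintro rfl
  rw [zero_pow (by omega), zero_mul] at h
  exact zero_ne_one h

private lemma st18_g {K : Type*} [Field K] {m : ℕ} {x : K} (hx : x ≠ 0)
    (h : x^(2*m+1)*(x+2*m) = 1) :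
    (2*(m:K)+2)*x^m + x^(m+1) + x^(-((m:ℤ)+1)) = 2*x^m*(x+2*m+1) := by
  have e : (-((m:ℤ)+1)) = -((m+1 : ℕ) : ℤ) := by push_cast; ring
  rw [e, zpow_neg, zpow_natCast]
  field_simp
  linear_combination -h

private lemma st18_mono {m : ℕ} {x y : ℝ} (hx : 0 < x) (hxy : x < y) :
    x^(2*m+1)*(x+2*m) < y^(2*m+1)*(y+2*m) := by
  have h1 : x^(2*m+1) < y^(2*m+1) := pow_lt_pow_left₀ hxy hx.le (by omega)
  have hm0 : (0:ℝ) ≤ m := Nat.cast_nonneg m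
  have hy : 0 < y := hx.trans hxy
  exact mul_lt_mul h1 (by linarith) (by linarith) (pow_pos hy _).le

private lemma st18_pos_root_unique {m : ℕ} (hm : 1 ≤ m) {a x : ℝ} (ha : 0 < a)
    (hae : a^(2*m+1)*(a+2*m) = 1) (hx1 : |x| ≤ 1) (hxe : x^(2*m+1)*(x+2*m) = 1) : x = a := by
  have hm1 : (1:ℝ) ≤ (m:ℝ) := by exact_mod_cast hm
  rcases le_or_gt x 0 with hx | hx
  · exfalso
    have h1 : x^(2*m+1) ≤ 0 := Odd.pow_nonpos ⟨m, by ring⟩ hx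
    have h2 : 0 ≤ x + 2*m := by
      have := (abs_le.1 hx1).1; linarith
    nlinarith
  · rcases lt_trichotomy x a with h | h | h
    · have := st18_mono (m:=m) hx h; rw [hxe, hae] at this; exact absurd this (lt_irrefl 1)
    · exact h
    · have := st18_mono (m:=m) ha h; rw [hxe, hae] at this; exact absurd this (lt_irrefl 1)

private lemma st18_psi_mono {m : ℕ} {a r : ℝ} (ha : 0 < a) (har : a ≤ r) (hr1 : r ≤ 1) :
    (r^(m+1))⁻¹ + r^m ≤ (a^(m+1))⁻¹ + a^m := by
  have hr0 : 0 < r := lt_of_lt_of_le ha har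
  have hX : 0 < a^m := pow_pos ha m
  have hY : 0 < r^m := pow_pos hr0 m
  have hXY : a^m ≤ r^m := pow_le_pow_left₀ ha.le har m
  have hY1 : r^m ≤ 1 := pow_le_one₀ hr0.le hr1
  have hX1 : a^m ≤ 1 := hXY.trans hY1
  have ha1 : a ≤ 1 := har.trans hr1
  have hP : r*(a^m*r^m) ≤ 1 := mul_le_one₀ hr1 (by positivity) (mul_le_one₀ hX1 hY.le hY1)
  have key : a^(m+1) * (1 + r^(m+1) * r^m) ≤ r^(m+1) * (1 + a^(m+1) * a^m) := by
    rw [pow_succ, pow_succ]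
    nlinarith [mul_nonneg hY.le (sub_nonneg.2 har),
      mul_nonneg (mul_nonneg ha.le (sub_nonneg.2 hXY)) (sub_nonneg.2 hP)]
  have hA : 0 < a^(m+1) := pow_pos ha _
  have hR : 0 < r^(m+1) := pow_pos hr0 _
  rw [← sub_nonneg]
  have expand : ((a^(m+1))⁻¹ + a^m) - ((r^(m+1))⁻¹ + r^m)
      = (r^(m+1) * (1 + a^(m+1)*a^m) - a^(m+1) * (1 + r^(m+1)*r^m)) / (a^(m+1)*r^(m+1)) := by
    field_simp
  rw [expand]
  exact div_nonneg (by linarith) (by positivity)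

private lemma st18_pow_sub (x y : ℂ) (M : ℝ) (hx : ‖x‖ ≤ M) (hy : ‖y‖ ≤ M) :
    ∀ n : ℕ, ‖x^(n+1) - y^(n+1)‖ ≤ ((n:ℝ)+1) * M^n * ‖x - y‖ := by
  have hM : 0 ≤ M := (norm_nonneg x).trans hx
  intro n
  induction n with
  | zero => simp
  | succ n ih =>
    have key : x^(n+1+1) - y^(n+1+1) = x*(x^(n+1) - y^(n+1)) + (x - y)*y^(n+1) := by ring
    calc ‖x^(n+1+1) - y^(n+1+1)‖
        ≤ ‖x*(x^(n+1) - y^(n+1))‖ + ‖(x - y)*y^(n+1)‖ := by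
          rw [key]; exact norm_add_le _ _
      _ = ‖x‖ * ‖x^(n+1) - y^(n+1)‖
            + ‖x-y‖ * ‖y‖ ^ (n+1) := by
          rw [norm_mul, norm_mul, norm_pow]
      _ ≤ M * (((n:ℝ)+1) * M^n * ‖x-y‖) + ‖x-y‖ * M^(n+1) := by
          have t1 := mul_le_mul hx ih (norm_nonneg _)  hM
          have t2 := mul_le_mul_of_nonneg_left
            (pow_le_pow_left₀ (norm_nonneg y) hy (n+1)) (norm_nonneg (x-y))
          linarith
      _ = (((n+1:ℕ):ℝ)+1) * M^(n+1) * ‖x-y‖ := by push_cast; ring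

private lemma st18_contract {K : ℕ} (hK : 1 ≤ K) {α β : ℂ} {c1 c2 C : ℝ}
    (h1 : c1 ≤ ‖α‖) (h2 : c2 ≤ ‖β‖)
    (hC1 : ‖α‖ ≤ C) (hC2 : ‖β‖ ≤ C)
    (hc1 : 0 < c1) (hc2 : 0 < c2)
    (hq : (K:ℝ) * C^(K-1) < (c1*c2)^K)
    (heq : (α - β) * (α^K * β^K) = β^K - α^K) : α = β := by
  by_contra hne
  have hd : 0 < ‖α - β‖ := norm_pos_iff.mpr (sub_ne_zero.2 hne)
  obtain ⟨n, rfl⟩ : ∃ n, K = n + 1 := ⟨K - 1, (Nat.succ_pred_eq_of_pos hK).symm⟩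
  have hps := st18_pow_sub β α C hC2 hC1 n
  have habs : ‖α - β‖ * (‖α‖ ^(n+1) * ‖β‖^(n+1))
      = ‖β^(n+1) - α^(n+1)‖ := by
    rw [← norm_pow, ← norm_pow, ← norm_mul, ← norm_mul, heq]
  have hmono : (c1*c2)^(n+1) ≤ ‖α‖^(n+1) * ‖β‖^(n+1) := by
    rw [mul_pow]
    exact mul_le_mul (pow_le_pow_left₀ hc1.le h1 _) (pow_le_pow_left₀ hc2.le h2 _)
      (pow_nonneg hc2.le _) (pow_nonneg (norm_nonneg α) _)
  have hba : ‖β - α‖ = ‖α - β‖ := norm_sub_rev β α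
  have hchain : (c1*c2)^(n+1) * ‖α-β‖ ≤ ((n:ℝ)+1) * C^n * ‖α-β‖ := by
    calc (c1*c2)^(n+1) * ‖α-β‖
        ≤ (‖α‖^(n+1) * ‖β‖^(n+1)) * ‖α-β‖ :=
          mul_le_mul_of_nonneg_right hmono hd.le
      _ = ‖β^(n+1) - α^(n+1)‖ := by rw [← habs]; ring
      _ ≤ ((n:ℝ)+1) * C^n * ‖β-α‖ := hps
      _ = ((n:ℝ)+1) * C^n * ‖α-β‖ := by rw [hba]
  have hle : (c1*c2)^(n+1) ≤ ((n:ℝ)+1) * C^n := le_of_mul_le_mul_right hchain hd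
  have hq' : ((n+1:ℕ):ℝ) * C^(n+1-1) < (c1*c2)^(n+1) := hq
  push_cast at hq'
  linarith

private lemma st18_big_unique {m : ℕ} (hm : 1 ≤ m) {α : ℂ} {a : ℝ}
    (hα : α^(2*m+1)*(α+2*(m:ℂ)) = 1)
    (har : a^(2*m+1)*(a+2*(m:ℝ)) = 1)
    (haL : -(2*(m:ℝ)) - 1 < a) (haU : a < -(2*(m:ℝ)))
    (hr : 1 < ‖α‖) : α = (a : ℂ) := by
  have hm1 : (1:ℝ) ≤ (m:ℝ) := by exact_mod_cast hm
  have hca : (a:ℂ)^(2*m+1)*((a:ℂ)+2*(m:ℂ)) = 1 := by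
    have := congrArg (Complex.ofReal) har
    push_cast at this
    exact this
  have heq : (α - (a:ℂ)) * (α^(2*m+1) * (a:ℂ)^(2*m+1)) = (a:ℂ)^(2*m+1) - α^(2*m+1) := by
    linear_combination ((a:ℂ)^(2*m+1)) * hα - (α^(2*m+1)) * hca
  have habs : ‖α‖^(2*m+1) * ‖α+2*(m:ℂ)‖ = 1 := by
    have := congrArg norm hα
    rwa [norm_mul, norm_pow, norm_one] at this
  have hw0 : 0 ≤ ‖α+2*(m:ℂ)‖ := norm_nonneg _
  have hrK : 1 < ‖α‖^(2*m+1) := one_lt_pow₀ hr (by omega)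
  have hw1 : ‖α+2*(m:ℂ)‖ < 1 := by nlinarith
  have h2m : ‖2*(m:ℂ)‖ = 2*(m:ℝ) := by
    have e : (2*(m:ℂ)) = (((2*(m:ℝ)) : ℝ) : ℂ) := by push_cast; ring
    rw [e, Complex.norm_real, Real.norm_eq_abs, abs_of_nonneg (by linarith : (0:ℝ) ≤ 2*(m:ℝ))]
  have hr_up : ‖α‖ ≤ 2*(m:ℝ) + ‖α+2*(m:ℂ)‖ := by
    have t := norm_add_le (α+2*(m:ℂ)) (-(2*(m:ℂ)))
    rw [show α+2*(m:ℂ) + -(2*(m:ℂ)) = α by ring, norm_neg, h2m] at t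
    linarith
  have hr_low : 2*(m:ℝ) - ‖α+2*(m:ℂ)‖ ≤ ‖α‖ := by
    have t := norm_add_le (α+2*(m:ℂ)) (-α)
    rw [show α+2*(m:ℂ) + -α = 2*(m:ℂ) by ring, norm_neg, h2m] at t
    linarith
  rcases eq_or_lt_of_le hm with hm1' | hm2
  · -- m = 1
    subst hm1'
    norm_num at hα habs hr_up hr_low haL haU har hca heq hw1 ⊢
    have hb' : ‖(a:ℂ)‖ = -a := by
      rw [Complex.norm_real, Real.norm_eq_abs, abs_of_neg (by linarith : a < 0)]
    have hw0' : 0 ≤ ‖α+2‖ := norm_nonneg _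
    have hr0 : (0:ℝ) < ‖α‖ := by linarith
    have h95 : (9/5:ℝ) ≤ ‖α‖ := by
      by_contra h'
      push_neg at h'
      have hr3 : (0:ℝ) < ‖α‖^3 := by positivity
      have k1 : ‖α‖^3*(2 - ‖α‖) ≤ 1 := by
        nlinarith [mul_le_mul_of_nonneg_left
          (show 2 - ‖α‖ ≤ ‖α+2‖ from by linarith) hr3.le, habs]
      have k2 : 1 < ‖α‖^3*(2 - ‖α‖) := by
        nlinarith [mul_pos (sub_pos.2 hr) (sub_pos.2 h'),
          mul_pos (mul_pos (sub_pos.2 hr) (sub_pos.2 h')) hr0,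
          mul_pos (mul_pos (mul_pos (sub_pos.2 hr) (sub_pos.2 h')) hr0) hr0,
          sq_nonneg (‖α‖ - 1)]
      linarith
    have hw5 : ‖α+2‖ ≤ 1/5 := by
      have h3 : (9/5:ℝ)^3 ≤ ‖α‖^3 := pow_le_pow_left₀ (by norm_num) h95 3
      nlinarith [mul_le_mul_of_nonneg_left h3 hw0', habs]
    have ha_up : -a ≤ 11/5 := by
      by_contra h'
      push_neg at h'
      have p1 : (0:ℝ) < -a - 11/5 := by linarith
      have py : (0:ℝ) < -a := by linarith
      nlinarith [har, mul_pos p1 p1, mul_pos (mul_pos p1 p1) p1, mul_pos p1 py,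
        mul_pos (mul_pos p1 py) py, mul_pos (mul_pos (mul_pos p1 py) py) py]
    refine st18_contract (K := 3) (c1 := 9/5) (c2 := 2) (C := 11/5) (by norm_num)
      h95 (by rw [hb']; linarith) (by linarith) (by rw [hb']; linarith)
      (by norm_num) (by norm_num) (by norm_num) heq
  · -- 2 ≤ m
    have hb : ‖(a:ℂ)‖ = -a := by
      rw [Complex.norm_real, Real.norm_eq_abs, abs_of_neg (by linarith : a < 0)]
    have hm2n : 2 ≤ m := hm2
    have hm2' : (2:ℝ) ≤ (m:ℝ) := by exact_mod_cast hm2n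
    refine st18_contract (K := 2*m+1) (c1 := 2*(m:ℝ)-1) (c2 := 2*(m:ℝ)) (C := 2*(m:ℝ)+1)
      (by omega) (by linarith) (by rw [hb]; linarith) (by linarith) (by rw [hb]; linarith)
      (by linarith) (by linarith) ?_ heq
    have e1 : 2*m+1-1 = 2*m := by omega
    rw [e1]
    have hlt : (2*(m:ℝ)+1) < (2*(m:ℝ)-1)*(2*(m:ℝ)) := by nlinarith
    calc ((2*m+1 : ℕ):ℝ) * (2*(m:ℝ)+1)^(2*m) = (2*(m:ℝ)+1)^(2*m+1) := by
          push_cast; rw [pow_succ]; ring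
      _ < ((2*(m:ℝ)-1)*(2*(m:ℝ)))^(2*m+1) := pow_lt_pow_left₀ hlt (by linarith) (by omega)

private lemma st18_strict_tri {z : ℂ} (h : z.re < ‖z‖) :
    ‖z+1‖ < ‖z‖ + 1 := by
  have hsq : ‖z+1‖^2 < (‖z‖ + 1)^2 := by
    rw [Complex.sq_norm, Complex.normSq_apply]
    have e1 : ‖z‖^2 = z.re^2 + z.im^2 := by
      rw [Complex.sq_norm, Complex.normSq_apply]; ring
    have e2 : (z+1).re = z.re + 1 := by simp
    have e3 : (z+1).im = z.im := by simp
    rw [e2, e3]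
    nlinarith [h, e1]
  exact lt_of_pow_lt_pow_left₀ 2 (by positivity) hsq

set_option maxHeartbeats 1000000 in
/-- Fix `m ≥ 1`, let `a₁₊ ∈ (0,1)` and `a₁₋ ∈ (−2m−1, −2m)` be the two real
roots of `t^(2m+2) + 2m·t^(2m+1) = 1`, and set `g₁(t) = (2m+2)tᵐ + t^(m+1) + t^(−(m+1))`.
Then: (1) every complex root `α ∉ {a₁₊, a₁₋}` satisfies `|g₁(α)| < g₁(a₁₊)`, and
`g₁(a₁₊) < 4m+4`; (2) `2(2m)ᵐ − 1 < (−1)ᵐ·g₁(a₁₋) < 2(2m)ᵐ`; (3) if `m ≥ 2` then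
`|g₁(a₁₋)| > g₁(a₁₊)`, while if `m = 1` then `g₁(a₁₊) > |g₁(a₁₋)|`. -/
theorem stmt_18 (m : ℕ) (hm : 1 ≤ m)
    (a1p : ℝ) (ha1p : a1p ∈ Set.Ioo (0 : ℝ) 1)
    (ha1pr : a1p ^ (2 * m + 2) + 2 * (m : ℝ) * a1p ^ (2 * m + 1) = 1)
    (a1m : ℝ) (ha1m : a1m ∈ Set.Ioo (-(2 * (m : ℝ)) - 1) (-(2 * (m : ℝ))))
    (ha1mr : a1m ^ (2 * m + 2) + 2 * (m : ℝ) * a1m ^ (2 * m + 1) = 1) :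
    ((∀ α : ℂ, α ^ (2 * m + 2) + 2 * (m : ℂ) * α ^ (2 * m + 1) = 1 →
        α ≠ (a1p : ℂ) → α ≠ (a1m : ℂ) →
        ‖(2 * (m : ℂ) + 2) * α ^ m + α ^ (m + 1) + α ^ (-((m : ℤ) + 1))‖ <
          (2 * (m : ℝ) + 2) * a1p ^ m + a1p ^ (m + 1) + a1p ^ (-((m : ℤ) + 1))) ∧
      (2 * (m : ℝ) + 2) * a1p ^ m + a1p ^ (m + 1) + a1p ^ (-((m : ℤ) + 1)) <
        4 * m + 4) ∧
    (2 * (2 * (m : ℝ)) ^ m - 1 <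
      (-1 : ℝ) ^ m *
        ((2 * (m : ℝ) + 2) * a1m ^ m + a1m ^ (m + 1) + a1m ^ (-((m : ℤ) + 1))) ∧
      (-1 : ℝ) ^ m *
        ((2 * (m : ℝ) + 2) * a1m ^ m + a1m ^ (m + 1) + a1m ^ (-((m : ℤ) + 1))) <
        2 * (2 * (m : ℝ)) ^ m) ∧
    ((2 ≤ m →
      |(2 * (m : ℝ) + 2) * a1m ^ m + a1m ^ (m + 1) + a1m ^ (-((m : ℤ) + 1))| >
        (2 * (m : ℝ) + 2) * a1p ^ m + a1p ^ (m + 1) + a1p ^ (-((m : ℤ) + 1))) ∧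
     (m = 1 →
      (2 * (m : ℝ) + 2) * a1p ^ m + a1p ^ (m + 1) + a1p ^ (-((m : ℤ) + 1)) >
        |(2 * (m : ℝ) + 2) * a1m ^ m + a1m ^ (m + 1) + a1m ^ (-((m : ℤ) + 1))|)) := by
  obtain ⟨hp0, hp1⟩ := ha1p
  obtain ⟨hmL, hmU⟩ := ha1m
  have hm1 : (1:ℝ) ≤ (m:ℝ) := by exact_mod_cast hm
  have hm0 : m ≠ 0 := by omega
  have hpe : a1p^(2*m+1)*(a1p+2*(m:ℝ)) = 1 := st18_root ha1pr
  have hme : a1m^(2*m+1)*(a1m+2*(m:ℝ)) = 1 := st18_root ha1mr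
  have hp_ne : a1p ≠ 0 := ne_of_gt hp0
  have hmneg : a1m < 0 := by linarith
  have hm_ne : a1m ≠ 0 := ne_of_lt hmneg
  have Gp := st18_g hp_ne hpe
  have Gm := st18_g hm_ne hme
  rw [Gp, Gm]
  -- facts about s
  set s : ℝ := -a1m - 2*(m:ℝ) with hs
  have hs0 : 0 < s := by rw [hs]; linarith
  have hs1 : s < 1 := by rw [hs]; linarith
  have ham : a1m = -(2*(m:ℝ)+s) := by rw [hs]; ring
  have hseq : s * (2*(m:ℝ)+s)^(2*m+1) = 1 := by
    have h1 : a1m^(2*m+1) = -((2*(m:ℝ)+s)^(2*m+1)) := by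
      rw [ham]; exact Odd.neg_pow ⟨m, by ring⟩ _
    have h2 : a1m + 2*(m:ℝ) = -s := by rw [hs]; ring
    have h3 := hme
    rw [h1, h2] at h3
    linear_combination h3
  have hsq : ((-1:ℝ)^m)^2 = 1 := by
    rw [← pow_mul, mul_comm, pow_mul]; norm_num
  have key2 : (-1:ℝ)^m * (2*a1m^m*(a1m+2*(m:ℝ)+1)) = 2*(2*(m:ℝ)+s)^m*(1-s) := by
    have h1 : a1m^m = (-1:ℝ)^m * (2*(m:ℝ)+s)^m := by rw [ham, neg_pow]
    have h2 : a1m + 2*(m:ℝ) + 1 = 1 - s := by rw [hs]; ring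
    rw [h1, h2]
    linear_combination (2*(2*(m:ℝ)+s)^m*(1-s)) * hsq
  have hT : (2:ℝ) ≤ 2*(m:ℝ) := by linarith
  have hTpos : (0:ℝ) < 2*(m:ℝ) := by linarith
  -- part (2) upper bound
  have hupper : 2*(2*(m:ℝ)+s)^m*(1-s) < 2*(2*(m:ℝ))^m := by
    set u : ℝ := s/(2*(m:ℝ)) with hu
    have hu_eq : 2*(m:ℝ)*u = s := by rw [hu]; field_simp
    have hu0 : 0 < u := by rw [hu]; positivity
    have hu2 : u < 1/2 := by
      nlinarith [mul_nonneg (show (0:ℝ) ≤ 2*(m:ℝ)-2 by linarith) hu0.le]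
    have hbern : (1-s:ℝ) ≤ (1 - u)^(2*m) := by
      have hb2 := one_add_mul_le_pow (a := -u) (by linarith : (-2:ℝ) ≤ -u) (2*m)
      have he : 1 + ((2*m:ℕ):ℝ) * (-u) = 1 - s := by push_cast; linarith [hu_eq]
      rw [he] at hb2
      have he2 : (1:ℝ) + -u = 1 - u := by ring
      rw [he2] at hb2
      exact hb2
    have hstep : (2*(m:ℝ)+s)^m * (1-s) ≤ (2*(m:ℝ)+s)^m * ((1-u)^2)^m := by
      have t := mul_le_mul_of_nonneg_left hbern (pow_nonneg (by linarith : (0:ℝ) ≤ 2*(m:ℝ)+s) m)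
      rw [pow_mul] at t
      exact t
    have hcore : (2*(m:ℝ)+s)*((1-u)^2) < 2*(m:ℝ) := by
      have e : (2*(m:ℝ)+s)*((1-u)^2) = 2*(m:ℝ)*((1+u)*(1-u)^2) := by
        rw [← hu_eq]; ring
      have huu : u*u < u*(1/2) := mul_lt_mul_of_pos_left hu2 hu0
      have hX : (1+u)*(1-u)^2 < 1 := by
        nlinarith [mul_pos hu0 (show (0:ℝ) < 1 - u*u by linarith)]
      calc (2*(m:ℝ)+s)*((1-u)^2) = 2*(m:ℝ)*((1+u)*(1-u)^2) := e
        _ < 2*(m:ℝ)*1 := mul_lt_mul_of_pos_left hX hTpos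
        _ = 2*(m:ℝ) := by ring
    have hfin : ((2*(m:ℝ)+s)*((1-u)^2))^m < (2*(m:ℝ))^m :=
      pow_lt_pow_left₀ hcore (by positivity) hm0
    rw [mul_pow] at hfin
    linarith [hstep, hfin]
  -- smallness of s
  have hs_small : 2*(2*(m:ℝ))^m * s ≤ 1/2 := by
    have h1 : (2*(m:ℝ))^(2*m+1) ≤ (2*(m:ℝ)+s)^(2*m+1) :=
      pow_le_pow_left₀ (by linarith) (by linarith) _
    have h2 : s * (2*(m:ℝ))^(2*m+1) ≤ 1 :=
      le_of_le_of_eq (mul_le_mul_of_nonneg_left h1 hs0.le) hseq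
    have h3 : (2*(m:ℝ))^(2*m+1) = (2*(m:ℝ))^m * (2*(m:ℝ))^(m+1) := by
      rw [← pow_add]; congr 1; omega
    have h4 : (4:ℝ) ≤ (2*(m:ℝ))^(m+1) := by
      calc (4:ℝ) = 2^2 := by norm_num
        _ ≤ (2:ℝ)^(m+1) := pow_le_pow_right₀ one_le_two (by omega)
        _ ≤ (2*(m:ℝ))^(m+1) := pow_le_pow_left₀ (by norm_num) (by linarith) _
    rw [h3] at h2
    nlinarith [mul_le_mul_of_nonneg_left h4
      (mul_nonneg hs0.le (pow_nonneg (by linarith : (0:ℝ) ≤ 2*(m:ℝ)) m)), h2]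
  -- part (2) lower bound
  have hbern2 : 1 + s/2 ≤ (1 + s/(2*(m:ℝ)))^m := by
    have hge : (-2:ℝ) ≤ s/(2*(m:ℝ)) := by
      have : (0:ℝ) ≤ s/(2*(m:ℝ)) := by positivity
      linarith
    have hb2 := one_add_mul_le_pow hge m
    have hmne : (m:ℝ) ≠ 0 := Nat.cast_ne_zero.2 hm0
    have he : 1 + (m:ℝ) * (s/(2*(m:ℝ))) = 1 + s/2 := by
      field_simp
    rw [he] at hb2
    exact hb2
  have hexp : (2*(m:ℝ)+s)^m = (2*(m:ℝ))^m * (1+s/(2*(m:ℝ)))^m := by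
    have hmne : (m:ℝ) ≠ 0 := Nat.cast_ne_zero.2 hm0
    rw [← mul_pow]; congr 1; field_simp
  have hlower : 2*(2*(m:ℝ))^m - 1 < 2*(2*(m:ℝ)+s)^m*(1-s) := by
    rw [hexp]
    have hPpos : (0:ℝ) < (2*(m:ℝ))^m := pow_pos hTpos m
    have h1s : (0:ℝ) ≤ 1 - s := by linarith
    nlinarith [mul_le_mul_of_nonneg_left hbern2 (mul_nonneg hPpos.le h1s), hs_small,
      mul_nonneg (mul_nonneg hPpos.le hs0.le) h1s]
  -- part (1b)
  have h1b : 2*a1p^m*(a1p+2*(m:ℝ)+1) < 4*(m:ℝ)+4 := by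
    have hx : a1p^m < 1 := pow_lt_one₀ hp0.le hp1 hm0
    nlinarith [pow_pos hp0 m,
      mul_pos (sub_pos.2 hx) (show (0:ℝ) < a1p+2*(m:ℝ)+1 by linarith)]
  -- abs of g at a1m
  have habs_m : |2*a1m^m*(a1m+2*(m:ℝ)+1)| = (-1:ℝ)^m * (2*a1m^m*(a1m+2*(m:ℝ)+1)) := by
    have hpos : 0 ≤ (-1:ℝ)^m * (2*a1m^m*(a1m+2*(m:ℝ)+1)) := by
      rw [key2]
      have hh : (0:ℝ) ≤ (2*(m:ℝ)+s)^m := pow_nonneg (by linarith) m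
      nlinarith
    have hflip : |(-1:ℝ)^m * (2*a1m^m*(a1m+2*(m:ℝ)+1))| = |2*a1m^m*(a1m+2*(m:ℝ)+1)| := by
      rw [abs_mul, abs_pow, abs_neg, abs_one, one_pow, one_mul]
    rw [← hflip]
    exact abs_of_nonneg hpos
  refine ⟨⟨?_, ?_⟩, ⟨?_, ?_⟩, ⟨?_, ?_⟩⟩
  · -- part (1a)
    intro α hαroot hne_p hne_m
    have hαe : α^(2*m+1)*(α+2*(m:ℂ)) = 1 := st18_root hαroot
    have hα0 : α ≠ 0 := st18_ne_zero hαe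
    have hGα := st18_g hα0 hαe
    rw [hGα]
    have h2m : ‖2*(m:ℂ)‖ = 2*(m:ℝ) := by
      have e : (2*(m:ℂ)) = (((2*(m:ℝ)) : ℝ) : ℂ) := by push_cast; ring
      rw [e, Complex.norm_real, Real.norm_eq_abs, abs_of_nonneg (by linarith : (0:ℝ) ≤ 2*(m:ℝ))]
    have habsK : ‖α‖^(2*m+1) * ‖α+2*(m:ℂ)‖ = 1 := by
      have := congrArg norm hαe
      rwa [norm_mul, norm_pow, norm_one] at this
    have hr0 : 0 < ‖α‖ := norm_pos_iff.mpr hα0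
    have hw0 : 0 ≤ ‖α+2*(m:ℂ)‖ := norm_nonneg _
    rcases le_or_gt (‖α‖) 1 with hcase | hcase
    · have htri : ‖α+2*(m:ℂ)‖ ≤ ‖α‖ + 2*(m:ℝ) := by
        have t := norm_add_le α (2*(m:ℂ))
        rw [h2m] at t
        exact t
      have hra : a1p ≤ ‖α‖ := by
        by_contra hlt
        push_neg at hlt
        have hmono := st18_mono (m := m) hr0 hlt
        rw [hpe] at hmono
        nlinarith [mul_le_mul_of_nonneg_left htri (pow_nonneg hr0.le (2*m+1)), habsK]
      have hre : (α+2*(m:ℂ)).re < ‖α+2*(m:ℂ)‖ := by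
        rcases eq_or_ne α.im 0 with him | him
        · exfalso
          have hαre : α = ((α.re : ℝ) : ℂ) := Complex.ext (by simp) (by simp [him])
          rw [hαre] at hαe
          have hre_eq : (α.re)^(2*m+1)*(α.re+2*(m:ℝ)) = 1 := by exact_mod_cast hαe
          have hxabs : |α.re| ≤ 1 := (Complex.abs_re_le_norm α).trans hcase
          have hfin := st18_pos_root_unique hm hp0 hpe hxabs hre_eq
          exact hne_p (by rw [hαre, hfin])
        · have him2 : (α+2*(m:ℂ)).im ≠ 0 := by simpa using him
          calc (α+2*(m:ℂ)).re ≤ |(α+2*(m:ℂ)).re| := le_abs_self _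
            _ < _ := Complex.abs_re_lt_norm.2 him2
      have hstrict : ‖α+2*(m:ℂ)+1‖ < ‖α+2*(m:ℂ)‖ + 1 :=
        st18_strict_tri hre
      have habs2 : ‖2*α^m*(α+2*(m:ℂ)+1)‖
          = 2 * ‖α‖^m * ‖α+2*(m:ℂ)+1‖ := by
        rw [norm_mul, norm_mul, norm_pow, Complex.norm_two]
      rw [habs2]
      have hinv : ‖α‖^m * ‖α+2*(m:ℂ)‖ = (‖α‖^(m+1))⁻¹ := by
        apply eq_inv_of_mul_eq_one_left
        rw [← habsK]; ring
      have hAinv : a1p^m*(a1p+2*(m:ℝ)) = (a1p^(m+1))⁻¹ := by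
        apply eq_inv_of_mul_eq_one_left
        rw [← hpe]; ring
      have hpsi := st18_psi_mono (m := m) hp0 hra hcase
      calc 2 * ‖α‖^m * ‖α+2*(m:ℂ)+1‖
          < 2 * ‖α‖^m * (‖α+2*(m:ℂ)‖ + 1) :=
            mul_lt_mul_of_pos_left hstrict (by positivity)
        _ = 2*((‖α‖^(m+1))⁻¹ + ‖α‖^m) := by rw [← hinv]; ring
        _ ≤ 2*((a1p^(m+1))⁻¹ + a1p^m) := by linarith [hpsi]
        _ = 2*a1p^m*(a1p+2*(m:ℝ)+1) := by rw [← hAinv]; ring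
    · exact absurd (st18_big_unique hm hαe hme hmL hmU hcase) hne_m
  · -- part (1b)
    exact h1b
  · -- part (2) lower
    rw [key2]; exact hlower
  · -- part (2) upper
    rw [key2]; exact hupper
  · -- part (3) m ≥ 2
    intro hm2
    have hm2' : (2:ℝ) ≤ (m:ℝ) := by exact_mod_cast hm2
    rw [habs_m, key2]
    have hpow : (2*(m:ℝ))^2 ≤ (2*(m:ℝ))^m := pow_le_pow_right₀ (by linarith) hm2
    have hgap : 4*(m:ℝ)+4 ≤ 2*(2*(m:ℝ))^m - 1 := by nlinarith [hpow, sq_nonneg ((m:ℝ)-2)]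
    linarith [hlower, h1b]
  · -- part (3) m = 1
    intro hmeq
    subst hmeq
    rw [habs_m, key2]
    have ha57 : (0.57:ℝ) ≤ a1p := by
      by_contra h'
      push_neg at h'
      have h3 : a1p^(2*1+1) < (0.57:ℝ)^(2*1+1) := pow_lt_pow_left₀ h' hp0.le (by norm_num)
      have h4 : a1p^(2*1+1)*(a1p+2*(1:ℕ)) < (0.57:ℝ)^(2*1+1)*(0.57+2*(1:ℕ)) := by
        apply mul_lt_mul h3 (by push_cast; linarith) (by push_cast; linarith) (by positivity)
      rw [hpe] at h4
      norm_num at h4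
    norm_num at hupper ⊢
    nlinarith [hupper, ha57, sq_nonneg (a1p - 0.57)]
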